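/- For every a ∈ ℂ, the type D.6_a bracket table satisfies the Jacobi identity, hence defines a 6-dimensional complex Lie algebra 𝔣_a; and the determinant of the Gram matrix of the Killing form of 𝔣_a with respect to the basis (T, X1, X2, X3, X4, X5) equals 4096·(4a²+9)³·(a²−4)². -/

import Mathlib

set_option maxHeartbeats 1000000

noncomputable def d6c (a : ℂ) : Fin 6 → Fin 6 → Fin 6 → ℂ :=
  ![![![0, 0, 0, 0, 0, 0],
     ![0, 1, 0, 0, 0, 0],
     ![0, 0, (-1), 0, 0, 0],
     ![0, 0, 0, 0, 0, 0],
     ![0, 0, 0, 0, 1, 0],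
     ![0, 0, 0, 0, 0, (-1)]],
   ![![0, (-1), 0, 0, 0, 0],
     ![0, 0, 0, 0, 0, 0],
     ![(3*a), 0, 0, (-2), 0, 0],
     ![0, (2*a), 0, 0, 3, 0],
     ![0, 0, 0, 0, 0, 0],
     ![6, 0, 0, (-a), 0, 0]],
   ![![0, 0, 1, 0, 0, 0],
     ![(-(3*a)), 0, 0, 2, 0, 0],
     ![0, 0, 0, 0, 0, 0],
     ![0, 0, (-(2*a)), 0, 0, (-3)],
     ![(-6), 0, 0, (a), 0, 0],
     ![0, 0, 0, 0, 0, 0]],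
   ![![0, 0, 0, 0, 0, 0],
     ![0, (-(2*a)), 0, 0, (-3), 0],
     ![0, 0, (-(-(2*a))), 0, 0, 3],
     ![0, 0, 0, 0, 0, 0],
     ![0, (-(a^2+3)), 0, 0, 0, 0],
     ![0, 0, (a^2+3), 0, 0, 0]],
   ![![0, 0, 0, 0, (-1), 0],
     ![0, 0, 0, 0, 0, 0],
     ![6, 0, 0, (-(a)), 0, 0],
     ![0, (-(-(a^2+3))), 0, 0, 0, 0],
     ![0, 0, 0, 0, 0, 0],
     ![(a*(a^2-1)), 0, 0, (-2), 0, 0]],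
   ![![0, 0, 0, 0, 0, 1],
     ![(-6), 0, 0, (-(-a)), 0, 0],
     ![0, 0, 0, 0, 0, 0],
     ![0, 0, (-(a^2+3)), 0, 0, 0],
     ![(-(a*(a^2-1))), 0, 0, 2, 0, 0],
     ![0, 0, 0, 0, 0, 0]]]

noncomputable def d6br (a : ℂ) (x y : Fin 6 → ℂ) : Fin 6 → ℂ :=
  fun k => ∑ i : Fin 6, ∑ j : Fin 6, x i * y j * d6c a i j k


section d6helper
variable {α : Type*} (p q r s t u : α)
lemma d6mcv0 (h : (0:ℕ) < 6) : ![p,q,r,s,t,u] ⟨0,h⟩ = p := rfl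
lemma d6mcv1 (h : (1:ℕ) < 6) : ![p,q,r,s,t,u] ⟨1,h⟩ = q := rfl
lemma d6mcv2 (h : (2:ℕ) < 6) : ![p,q,r,s,t,u] ⟨2,h⟩ = r := rfl
lemma d6mcv3 (h : (3:ℕ) < 6) : ![p,q,r,s,t,u] ⟨3,h⟩ = s := rfl
lemma d6mcv4 (h : (4:ℕ) < 6) : ![p,q,r,s,t,u] ⟨4,h⟩ = t := rfl
lemma d6mcv5 (h : (5:ℕ) < 6) : ![p,q,r,s,t,u] ⟨5,h⟩ = u := rfl
lemma d6cv5 : ![p,q,r,s,t,u] 5 = u := rfl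
end d6helper

lemma d6br_eq (a : ℂ) (x y : Fin 6 → ℂ) : d6br a x y =
  ![((3*a) * x 1 * y 2 + (6) * x 1 * y 5 + (-(3*a)) * x 2 * y 1 + (-6) * x 2 * y 4 + (6) * x 4 * y 2 + (a*(a^2-1)) * x 4 * y 5 + (-6) * x 5 * y 1 + (-(a*(a^2-1))) * x 5 * y 4),
    (x 0 * y 1 + (-1) * x 1 * y 0 + (2*a) * x 1 * y 3 + (-(2*a)) * x 3 * y 1 + (-(a^2+3)) * x 3 * y 4 + (a^2+3) * x 4 * y 3),
    ((-1) * x 0 * y 2 + x 2 * y 0 + (-(2*a)) * x 2 * y 3 + (2*a) * x 3 * y 2 + (a^2+3) * x 3 * y 5 + (-(a^2+3)) * x 5 * y 3),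
    ((-2) * x 1 * y 2 + (-a) * x 1 * y 5 + (2) * x 2 * y 1 + a * x 2 * y 4 + (-a) * x 4 * y 2 + (-2) * x 4 * y 5 + a * x 5 * y 1 + (2) * x 5 * y 4),
    (x 0 * y 4 + (3) * x 1 * y 3 + (-3) * x 3 * y 1 + (-1) * x 4 * y 0),
    ((-1) * x 0 * y 5 + (-3) * x 2 * y 3 + (3) * x 3 * y 2 + x 5 * y 0)] := by
  funext k
  fin_cases k <;>
  · simp only [d6br, d6c, Fin.sum_univ_six, d6cv5, d6mcv0, d6mcv1, d6mcv2, d6mcv3, d6mcv4, d6mcv5,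
      Matrix.cons_val_zero, Matrix.cons_val_one, Matrix.head_cons, Matrix.cons_val_two,
      Matrix.tail_cons, Matrix.cons_val_three, Matrix.cons_val_four, Fin.isValue,
      mul_zero, zero_mul, mul_one, mul_neg, neg_mul, add_zero, zero_add]
    ring

lemma d6_jacobi (a : ℂ) : (∀ x y z : Fin 6 → ℂ,
      d6br a x (d6br a y z) + d6br a y (d6br a z x) + d6br a z (d6br a x y) = 0) := by
  intro x y z
  simp only [d6br_eq]
  funext k
  fin_cases k <;>
  · simp only [Pi.add_apply, Pi.zero_apply, d6cv5, d6mcv0, d6mcv1, d6mcv2, d6mcv3, d6mcv4, d6mcv5,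
      Matrix.cons_val_zero, Matrix.cons_val_one, Matrix.head_cons, Matrix.cons_val_two,
      Matrix.tail_cons, Matrix.cons_val_three, Matrix.cons_val_four, Fin.isValue]
    ring

lemma d6det4h (w x z : ℂ) : Matrix.det !![0,w,0,x; w,0,x,0; 0,x,0,z; x,0,z,0] = (w*z - x^2)^2 := by
  simp [Matrix.det_succ_row_zero, Fin.sum_univ_succ,
    show Fin.succAbove (1:Fin 4) 2 = 3 from rfl, show Fin.castSucc (2:Fin 3) = 2 from rfl,
    show Fin.succAbove (3:Fin 4) 2 = 2 from rfl]
  ring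

noncomputable def d6E : Fin 2 ⊕ Fin 4 ≃ Fin 6 :=
    ⟨Sum.elim ![0,3] ![1,2,4,5],
     fun j => ![Sum.inl 0, Sum.inr 0, Sum.inr 1, Sum.inl 1, Sum.inr 2, Sum.inr 3] j,
     fun x => by rcases x with x|x <;> fin_cases x <;> rfl,
     fun x => by fin_cases x <;> rfl⟩

lemma d6det6h (a : ℂ) : Matrix.det !![4, 0, 0, -4*a, 0, 0;
           0, 0, 20*a, 0, 0, 4*a^2+24;
           0, 20*a, 0, 0, 4*a^2+24, 0;
           -4*a, 0, 0, 20*a^2+36, 0, 0;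
           0, 0, 4*a^2+24, 0, 0, 4*a^3+4*a;
           0, 4*a^2+24, 0, 0, 4*a^3+4*a, 0] = 4096 * (4 * a ^ 2 + 9) ^ 3 * (a ^ 2 - 4) ^ 2 := by
  rw [← Matrix.det_submatrix_equiv_self d6E]
  have hsub : (!![4, 0, 0, -4*a, 0, 0;
           0, 0, 20*a, 0, 0, 4*a^2+24;
           0, 20*a, 0, 0, 4*a^2+24, 0;
           -4*a, 0, 0, 20*a^2+36, 0, 0;
           0, 0, 4*a^2+24, 0, 0, 4*a^3+4*a;
           0, 4*a^2+24, 0, 0, 4*a^3+4*a, 0]).submatrix d6E d6E =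
      Matrix.fromBlocks !![4, -4*a; -4*a, 20*a^2+36] 0 0
        !![0,20*a,0,4*a^2+24; 20*a,0,4*a^2+24,0; 0,4*a^2+24,0,4*a^3+4*a; 4*a^2+24,0,4*a^3+4*a,0] := by
    ext i j
    rcases i with i|i <;> rcases j with j|j <;> fin_cases i <;> fin_cases j <;> rfl
  rw [hsub, Matrix.det_fromBlocks_zero₂₁, Matrix.det_fin_two_of, d6det4h]
  ring

theorem D6_table_jacobi_and_killing_det (a : ℂ)
    {F : Type*} [LieRing F] [LieAlgebra ℂ F]
    (T X1 X2 X3 X4 X5 : F)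
    (hbindep : LinearIndependent ℂ ![T, X1, X2, X3, X4, X5])
    (hbspan : Submodule.span ℂ (Set.range ![T, X1, X2, X3, X4, X5]) = ⊤)
    (hb01 : ⁅T, X1⁆ = X1)
    (hb02 : ⁅T, X2⁆ = -X2)
    (hb03 : ⁅T, X3⁆ = 0)
    (hb04 : ⁅T, X4⁆ = X4)
    (hb05 : ⁅T, X5⁆ = -X5)
    (hb12 : ⁅X1, X2⁆ = (3*a) • T + (-2 : ℂ) • X3)
    (hb13 : ⁅X1, X3⁆ = (2*a) • X1 + (3 : ℂ) • X4)
    (hb14 : ⁅X1, X4⁆ = 0)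
    (hb15 : ⁅X1, X5⁆ = (6 : ℂ) • T + (-a) • X3)
    (hb23 : ⁅X2, X3⁆ = (-(2*a)) • X2 + (-3 : ℂ) • X5)
    (hb24 : ⁅X2, X4⁆ = (-6 : ℂ) • T + (a) • X3)
    (hb25 : ⁅X2, X5⁆ = 0)
    (hb34 : ⁅X3, X4⁆ = (-(a^2+3)) • X1)
    (hb35 : ⁅X3, X5⁆ = (a^2+3) • X2)
    (hb45 : ⁅X4, X5⁆ = (a*(a^2-1)) • T + (-2 : ℂ) • X3) :
    (∀ x y z : Fin 6 → ℂ,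
      d6br a x (d6br a y z) + d6br a y (d6br a z x) + d6br a z (d6br a x y) = 0) ∧
    Matrix.det (Matrix.of fun i j =>
        killingForm ℂ F (![T, X1, X2, X3, X4, X5] i) (![T, X1, X2, X3, X4, X5] j)) =
      4096 * (4 * a ^ 2 + 9) ^ 3 * (a ^ 2 - 4) ^ 2 := by
  constructor
  · exact d6_jacobi a
  · have hspan' : ⊤ ≤ Submodule.span ℂ (Set.range ![T, X1, X2, X3, X4, X5]) := hbspan.ge
    let b : Module.Basis (Fin 6) ℂ F := Module.Basis.mk hbindep hspan'
    have hb : ∀ i, b i = ![T, X1, X2, X3, X4, X5] i := fun i => Module.Basis.mk_apply hbindep hspan' i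
    have hb10 : ⁅X1, T⁆ = -X1 := by rw [← lie_skew, hb01]
    have hb20 : ⁅X2, T⁆ = -(-X2) := by rw [← lie_skew, hb02]
    have hb30 : ⁅X3, T⁆ = -(0:F) := by rw [← lie_skew, hb03]
    have hb40 : ⁅X4, T⁆ = -X4 := by rw [← lie_skew, hb04]
    have hb50 : ⁅X5, T⁆ = -(-X5) := by rw [← lie_skew, hb05]
    have hb21 : ⁅X2, X1⁆ = -((3*a) • T + (-2 : ℂ) • X3) := by rw [← lie_skew, hb12]
    have hb31 : ⁅X3, X1⁆ = -((2*a) • X1 + (3 : ℂ) • X4) := by rw [← lie_skew, hb13]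
    have hb41 : ⁅X4, X1⁆ = -(0:F) := by rw [← lie_skew, hb14]
    have hb51 : ⁅X5, X1⁆ = -((6 : ℂ) • T + (-a) • X3) := by rw [← lie_skew, hb15]
    have hb32 : ⁅X3, X2⁆ = -((-(2*a)) • X2 + (-3 : ℂ) • X5) := by rw [← lie_skew, hb23]
    have hb42 : ⁅X4, X2⁆ = -((-6 : ℂ) • T + (a) • X3) := by rw [← lie_skew, hb24]
    have hb52 : ⁅X5, X2⁆ = -(0:F) := by rw [← lie_skew, hb25]
    have hb43 : ⁅X4, X3⁆ = -((-(a^2+3)) • X1) := by rw [← lie_skew, hb34]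
    have hb53 : ⁅X5, X3⁆ = -((a^2+3) • X2) := by rw [← lie_skew, hb35]
    have hb54 : ⁅X5, X4⁆ = -((a*(a^2-1)) • T + (-2 : ℂ) • X3) := by rw [← lie_skew, hb45]
    have had : ∀ i : Fin 6, LieAlgebra.ad ℂ F (b i)
        = Matrix.toLin b b (Matrix.of fun k j => d6c a i j k) := by
      intro i
      refine b.ext fun j => ?_
      rw [Matrix.toLin_self, LieAlgebra.ad_apply]
      simp only [hb, Matrix.of_apply]
      fin_cases i <;> fin_cases j <;>
      · simp only [d6c, Fin.sum_univ_six, d6cv5, d6mcv0, d6mcv1, d6mcv2, d6mcv3, d6mcv4, d6mcv5,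
          Matrix.cons_val_zero, Matrix.cons_val_one, Matrix.head_cons, Matrix.cons_val_two,
          Matrix.tail_cons, Matrix.cons_val_three, Matrix.cons_val_four, Fin.isValue,
          lie_self, hb01, hb02, hb03, hb04, hb05, hb12, hb13, hb14, hb15, hb23, hb24, hb25,
          hb34, hb35, hb45, hb10, hb20, hb30, hb40, hb50, hb21, hb31, hb41, hb51, hb32, hb42,
          hb52, hb43, hb53, hb54,
          zero_smul, one_smul, smul_zero, neg_smul, neg_neg, add_zero, zero_add, smul_add, smul_neg]
        try module
    have hK : ∀ i j : Fin 6, killingForm ℂ F (b i) (b j)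
        = Matrix.trace ((Matrix.of fun k l => d6c a i l k) * (Matrix.of fun k l => d6c a j l k)) := by
      intro i j
      rw [killingForm_apply_apply, LinearMap.trace_eq_matrix_trace ℂ b, had i, had j,
        ← Matrix.toLin_mul b b b, LinearMap.toMatrix_toLin]
    have hKmat : (Matrix.of fun i j =>
        killingForm ℂ F (![T, X1, X2, X3, X4, X5] i) (![T, X1, X2, X3, X4, X5] j)) =
        !![4, 0, 0, -4*a, 0, 0;
           0, 0, 20*a, 0, 0, 4*a^2+24;
           0, 20*a, 0, 0, 4*a^2+24, 0;
           -4*a, 0, 0, 20*a^2+36, 0, 0;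
           0, 0, 4*a^2+24, 0, 0, 4*a^3+4*a;
           0, 4*a^2+24, 0, 0, 4*a^3+4*a, 0] := by
      funext i j
      rw [Matrix.of_apply, ← hb i, ← hb j, hK i j]
      fin_cases i <;> fin_cases j <;>
      · simp only [Matrix.trace, Matrix.diag, Matrix.mul_apply, Matrix.of_apply, d6c,
          Fin.sum_univ_six, d6cv5, d6mcv0, d6mcv1, d6mcv2, d6mcv3, d6mcv4, d6mcv5,
          Matrix.cons_val_zero, Matrix.cons_val_one, Matrix.head_cons, Matrix.cons_val_two,
          Matrix.tail_cons, Matrix.cons_val_three, Matrix.cons_val_four, Fin.isValue]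
        ring
    rw [hKmat, d6det6h]
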